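/- Let p be prime and k ≥ 1. The number of polynomials P with nonnegative coefficients, P(0)=0, P(1)=p, such that P divides x^2·Φ_p(x)^2·Φ_{p^2}(x)·⋯·Φ_{p^k}(x) with cofactor also having nonnegative coefficients, vanishing at 0, and value p^k at 1, is exactly k; explicitly the factorizations are P = x·Φ_{p^i} for each 1 ≤ i ≤ k. -/

import Mathlib

open Polynomial

private lemma nonneg_coeff_mul {f g : ℤ[X]} (hf : ∀ n, 0 ≤ f.coeff n)
    (hg : ∀ n, 0 ≤ g.coeff n) : ∀ n, 0 ≤ (f * g).coeff n := by
  intro n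
  rw [coeff_mul]
  exact Finset.sum_nonneg fun x _ => mul_nonneg (hf _) (hg _)

private lemma nonneg_coeff_X : ∀ n, 0 ≤ (X : ℤ[X]).coeff n := by
  intro n; rw [coeff_X]; split_ifs <;> norm_num

private lemma nonneg_coeff_cyclo {p : ℕ} (hp : p.Prime) (i : ℕ) (hi : 1 ≤ i) :
    ∀ m, 0 ≤ (cyclotomic (p ^ i) ℤ).coeff m := by
  obtain ⟨j, rfl⟩ : ∃ j, i = j + 1 := ⟨i - 1, (Nat.succ_pred_eq_of_pos hi).symm⟩
  intro m
  rw [cyclotomic_prime_pow_eq_geom_sum hp, finset_sum_coeff]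
  apply Finset.sum_nonneg
  intro x _
  rw [← pow_mul, coeff_X_pow]
  split_ifs <;> norm_num

private lemma dvd_prod_primes_aux {α : Type*} [CommMonoidWithZero α] [IsCancelMulZero α] :
    ∀ (s : Multiset α), (∀ q ∈ s, Prime q) → ∀ a : α, a ∣ s.prod →
      ∃ t ≤ s, Associated a t.prod := by
  intro s
  induction s using Multiset.induction with
  | empty =>
      intro _ a ha
      rw [Multiset.prod_zero] at ha
      exact ⟨0, le_refl _, by
        rw [Multiset.prod_zero]
        exact associated_one_iff_isUnit.mpr (isUnit_of_dvd_one ha)⟩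
  | cons q s ih =>
      intro hq a ha
      have hqp : Prime q := hq q (Multiset.mem_cons_self q s)
      rw [Multiset.prod_cons] at ha
      have hs : ∀ r ∈ s, Prime r := fun r hr => hq r (Multiset.mem_cons_of_mem hr)
      by_cases h : q ∣ a
      · obtain ⟨a', rfl⟩ := h
        have ha' : a' ∣ s.prod := (mul_dvd_mul_iff_left hqp.ne_zero).mp ha
        obtain ⟨t, ht, hass⟩ := ih hs a' ha'
        exact ⟨q ::ₘ t, Multiset.cons_le_cons q ht, by
          rw [Multiset.prod_cons]; exact Associated.mul_left q hass⟩
      · obtain ⟨c, hc⟩ := ha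
        have hqc : q ∣ a * c := ⟨s.prod, hc.symm⟩
        rcases hqp.2.2 a c hqc with h' | h'
        · exact absurd h' h
        · obtain ⟨c', rfl⟩ := h'
          have : s.prod = a * c' := by
            apply mul_left_cancel₀ hqp.ne_zero
            rw [hc, mul_left_comm]
          obtain ⟨t, ht, hass⟩ := ih hs a ⟨c', this⟩
          exact ⟨t, ht.trans (Multiset.le_cons_self s q), hass⟩

theorem relabelings_p_and_pk (p k : ℕ) (hp : p.Prime) (hk : 1 ≤ k) :
    {P : ℤ[X] | (∀ n, 0 ≤ P.coeff n) ∧ P.eval 0 = 0 ∧ P.eval 1 = p ∧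
        ∃ Q : ℤ[X], (∀ n, 0 ≤ Q.coeff n) ∧ Q.eval 0 = 0 ∧ Q.eval 1 = (p : ℤ) ^ k ∧
          P * Q = X ^ 2 * cyclotomic p ℤ * ∏ i ∈ Finset.Icc 1 k, cyclotomic (p ^ i) ℤ} =
      ↑((Finset.Icc 1 k).image fun i => X * cyclotomic (p ^ i) ℤ) ∧
    ((Finset.Icc 1 k).image fun i => (X : ℤ[X]) * cyclotomic (p ^ i) ℤ).card = k := by
  haveI : Fact p.Prime := ⟨hp⟩
  have hp2 : 2 ≤ p := hp.two_le
  have hppos : (0:ℤ) < p := by exact_mod_cast hp.pos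
  have heval1 : ∀ i : ℕ, 1 ≤ i → eval 1 (cyclotomic (p ^ i) ℤ) = p := by
    intro i hi
    obtain ⟨j, rfl⟩ : ∃ j, i = j + 1 := ⟨i - 1, (Nat.succ_pred_eq_of_pos hi).symm⟩
    exact eval_one_cyclotomic_prime_pow j
  have hprime : ∀ i : ℕ, 1 ≤ i → Prime (cyclotomic (p ^ i) ℤ) := by
    intro i hi
    exact (cyclotomic.irreducible (pow_pos hp.pos i)).prime
  constructor
  · ext P
    simp only [Set.mem_setOf_eq, Finset.coe_image, Set.mem_image, Finset.mem_coe,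
      Finset.mem_Icc]
    constructor
    · rintro ⟨hPn, hP0, hP1, Q, hQn, hQ0, hQ1, hPQ⟩
      -- X ∣ P and X ∣ Q
      have hXP : X ∣ P := X_dvd_iff.mpr (by rwa [← coeff_zero_eq_eval_zero] at hP0)
      have hXQ : X ∣ Q := X_dvd_iff.mpr (by rwa [← coeff_zero_eq_eval_zero] at hQ0)
      obtain ⟨P₁, rfl⟩ := hXP
      obtain ⟨Q₁, rfl⟩ := hXQ
      have hP₁1 : P₁.eval 1 = (p:ℤ) := by simpa using hP1
      -- cancel X^2
      set M : Multiset ℤ[X] :=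
        cyclotomic p ℤ ::ₘ (Finset.Icc 1 k).val.map (fun i => cyclotomic (p ^ i) ℤ) with hM
      have hMprod : M.prod = cyclotomic p ℤ * ∏ i ∈ Finset.Icc 1 k, cyclotomic (p ^ i) ℤ := by
        rw [hM, Multiset.prod_cons]; rfl
      have hkey : P₁ * Q₁ = M.prod := by
        have h2 : (X:ℤ[X])^2 * (P₁ * Q₁) = X^2 * M.prod := by
          calc (X:ℤ[X])^2 * (P₁ * Q₁) = X * P₁ * (X * Q₁) := by ring
            _ = X ^ 2 * cyclotomic p ℤ * ∏ i ∈ Finset.Icc 1 k, cyclotomic (p ^ i) ℤ := hPQ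
            _ = X^2 * M.prod := by rw [hMprod]; ring
        exact mul_left_cancel₀ (pow_ne_zero 2 X_ne_zero) h2
      have hMprime : ∀ q ∈ M, Prime q := by
        intro q hq
        rw [hM, Multiset.mem_cons] at hq
        rcases hq with rfl | hq
        · have := hprime 1 le_rfl; rwa [pow_one] at this
        · obtain ⟨i, hi, rfl⟩ := Multiset.mem_map.mp hq
          exact hprime i (Finset.mem_Icc.mp hi).1
      obtain ⟨t, ht, hass⟩ := dvd_prod_primes_aux M hMprime P₁ ⟨Q₁, hkey.symm⟩
      -- eval at 1
      have hMeval : ∀ q ∈ M, eval 1 q = (p:ℤ) := by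
        intro q hq
        rw [hM, Multiset.mem_cons] at hq
        rcases hq with rfl | hq
        · have := heval1 1 le_rfl; rwa [pow_one] at this
        · obtain ⟨i, hi, rfl⟩ := Multiset.mem_map.mp hq
          exact heval1 i (Finset.mem_Icc.mp hi).1
      have hteval : ∀ q ∈ t, eval 1 q = (p:ℤ) := fun q hq => hMeval q (Multiset.mem_of_le ht hq)
      obtain ⟨u, hu⟩ := hass
      obtain ⟨r, hr, hru⟩ := Polynomial.isUnit_iff.mp u.isUnit
      have heq : P₁ * C r = t.prod := by rw [hru]; exact hu
      have ht1 : (eval 1 t.prod) = (p:ℤ) ^ Multiset.card t := by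
        rw [eval_multiset_prod]
        have hrep : Multiset.map (eval 1) t = Multiset.replicate (Multiset.card t) (p:ℤ) := by
          refine Multiset.eq_replicate.mpr ⟨Multiset.card_map _ _, ?_⟩
          intro x hx
          obtain ⟨q, hq, rfl⟩ := Multiset.mem_map.mp hx
          exact hteval q hq
        rw [hrep, Multiset.prod_replicate]
      have hre : (p:ℤ) * r = (p:ℤ) ^ Multiset.card t := by
        have := congrArg (eval 1) heq
        rwa [eval_mul, eval_C, hP₁1, ht1] at this
      rcases Int.isUnit_iff.mp hr with rfl | rfl
      · -- r = 1
        have hcard : Multiset.card t = 1 := by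
          have : (p:ℤ) ^ Multiset.card t = (p:ℤ) ^ 1 := by rw [pow_one, ← hre]; ring
          have hnat : p ^ Multiset.card t = p ^ 1 := by exact_mod_cast this
          exact Nat.pow_right_injective hp2 hnat
        obtain ⟨f, rfl⟩ := Multiset.card_eq_one.mp hcard
        have hP₁f : P₁ = f := by
          have := heq
          rw [map_one, mul_one, Multiset.prod_singleton] at this
          exact this
        have hfM : f ∈ M := Multiset.mem_of_le ht (Multiset.mem_singleton_self f)
        rw [hM, Multiset.mem_cons] at hfM
        rcases hfM with rfl | hfM
        · exact ⟨1, ⟨le_rfl, hk⟩, by rw [hP₁f, pow_one]⟩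
        · obtain ⟨i, hi, rfl⟩ := Multiset.mem_map.mp hfM
          exact ⟨i, Finset.mem_Icc.mp hi, by rw [hP₁f]⟩
      · -- r = -1 : contradiction
        exfalso
        rw [mul_neg_one] at hre
        have : (0:ℤ) < (p:ℤ) ^ Multiset.card t := pow_pos hppos _
        omega
    · rintro ⟨i, ⟨hi1, hik⟩, rfl⟩
      have hiIcc : i ∈ Finset.Icc 1 k := Finset.mem_Icc.mpr ⟨hi1, hik⟩
      refine ⟨nonneg_coeff_mul nonneg_coeff_X (nonneg_coeff_cyclo hp i hi1), by simp, ?_, ?_⟩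
      · simp [heval1 i hi1]
      · refine ⟨X * cyclotomic p ℤ * ∏ j ∈ (Finset.Icc 1 k).erase i, cyclotomic (p ^ j) ℤ,
          ?_, by simp, ?_, ?_⟩
        · apply nonneg_coeff_mul (nonneg_coeff_mul nonneg_coeff_X
            (by have := nonneg_coeff_cyclo hp 1 le_rfl; rwa [pow_one] at this))
          exact Finset.prod_induction _ (fun g : ℤ[X] => ∀ n, 0 ≤ g.coeff n)
            (fun f g hf hg => nonneg_coeff_mul hf hg)
            (fun n => by rw [coeff_one]; split_ifs <;> norm_num)
            (fun j hj =>
              nonneg_coeff_cyclo hp j (Finset.mem_Icc.mp (Finset.mem_of_mem_erase hj)).1)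
        · rw [eval_mul, eval_mul, eval_X, one_mul]
          have h1 : eval 1 (cyclotomic p ℤ) = (p:ℤ) := by
            have := heval1 1 le_rfl; rwa [pow_one] at this
          rw [h1, eval_prod]
          have : ∀ j ∈ (Finset.Icc 1 k).erase i, eval 1 (cyclotomic (p ^ j) ℤ) = (p:ℤ) :=
            fun j hj => heval1 j (Finset.mem_Icc.mp (Finset.mem_of_mem_erase hj)).1
          rw [Finset.prod_congr rfl this, Finset.prod_const,
            Finset.card_erase_of_mem hiIcc, Nat.card_Icc]
          rw [← pow_succ']
          congr 1
          omega
        · have herase := Finset.mul_prod_erase (Finset.Icc 1 k)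
            (fun j => cyclotomic (p ^ j) ℤ) hiIcc
          calc X * cyclotomic (p ^ i) ℤ *
              (X * cyclotomic p ℤ * ∏ j ∈ (Finset.Icc 1 k).erase i, cyclotomic (p ^ j) ℤ)
              = X ^ 2 * cyclotomic p ℤ * (cyclotomic (p ^ i) ℤ *
                ∏ j ∈ (Finset.Icc 1 k).erase i, cyclotomic (p ^ j) ℤ) := by ring
            _ = _ := by rw [herase]
  · rw [Finset.card_image_of_injective _ ?_, Nat.card_Icc]
    · omega
    · intro a b hab
      have : cyclotomic (p ^ a) ℤ = cyclotomic (p ^ b) ℤ :=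
        mul_left_cancel₀ X_ne_zero hab
      exact Nat.pow_right_injective hp2 (cyclotomic_injective this)
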